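/- For every n ≥ 1 and every subset S ⊆ [3]^n: S meets the prime conditions if and only if the pre-n-isolator of S is consistent with S5[Con,Ground,Min_n] (i.e., S5[Con,Ground,Min_n] does not prove its negation). -/

import Mathlib

namespace KripkeModal

/-- Formulas of the modal language `L_□`: atoms `T(x)`, `F(x)` for variables
`x : ℕ`, negation, conjunction, and box. -/
inductive Fml : Type
  | tt : ℕ → Fml   -- T(x)
  | ff : ℕ → Fml   -- F(x)
  | neg : Fml → Fml
  | and : Fml → Fml → Fml
  | box : Fml → Fml
deriving DecidableEq

namespace Fml

/-- Material implication, defined from `¬, ∧`. -/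
def imp (φ ψ : Fml) : Fml := neg (and φ (neg ψ))

/-- Disjunction, defined from `¬, ∧`. -/
def or (φ ψ : Fml) : Fml := neg (and (neg φ) (neg ψ))

/-- Biconditional. -/
def iff (φ ψ : Fml) : Fml := and (imp φ ψ) (imp ψ φ)

/-- Diamond: `◇φ := ¬□¬φ`. -/
def dia (φ : Fml) : Fml := neg (box (neg φ))

/-- `N(x) := ¬T(x) ∧ ¬F(x)`. -/
def Nf (x : ℕ) : Fml := and (neg (tt x)) (neg (ff x))

/-- A fixed contradiction. -/
def bot : Fml := and (tt 0) (neg (tt 0))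

end Fml

open Fml

/-- Evaluate a formula propositionally under a valuation `v` of the "atoms":
the atomic formulas `T(x)`, `F(x)` and all boxed formulas are treated as
propositional atoms. -/
def evalProp (v : Fml → Bool) : Fml → Bool
  | Fml.neg φ => !(evalProp v φ)
  | Fml.and φ ψ => evalProp v φ && evalProp v ψ
  | φ => v φ

/-- A formula is a substitution instance of a classical propositional tautology
iff it evaluates to true under every propositional valuation of its atoms. -/
def Tautology (φ : Fml) : Prop := ∀ v : Fml → Bool, evalProp v φ = true

/-- Provability in the modal system `S5[Ax]`: the smallest set of formulas
containing all substitution instances of propositional tautologies, all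
instances of K, T and 5, all formulas in `Ax`, closed under modus ponens and
necessitation.  Taking `Ax = ∅` gives `S5` itself. -/
inductive Prv (Ax : Set Fml) : Fml → Prop
  | taut {φ} : Tautology φ → Prv Ax φ
  | axK (A B : Fml) : Prv Ax (imp (box (imp A B)) (imp (box A) (box B)))
  | axT (A : Fml) : Prv Ax (imp (box A) A)
  | ax5 (A : Fml) : Prv Ax (imp (dia A) (box (dia A)))
  | axm {φ} : φ ∈ Ax → Prv Ax φ
  | mp {A B} : Prv Ax (imp A B) → Prv Ax A → Prv Ax B
  | nec {A} : Prv Ax A → Prv Ax (box A)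

/-- A system is consistent if it does not prove a contradiction. -/
def Consistent (Ax : Set Fml) : Prop := ¬ Prv Ax Fml.bot

/-- The axiom schema `Con`: `¬(T(x) ∧ F(x))`. -/
def ConAx : Set Fml := { φ | ∃ x : ℕ, φ = neg (and (tt x) (ff x)) }

/-- The axiom schema `Ground`: `(◇T(x) ∧ ◇F(x)) → ◇N(x)`. -/
def GroundAx : Set Fml :=
  { φ | ∃ x : ℕ, φ = imp (and (dia (tt x)) (dia (ff x))) (dia (Nf x)) }

/-- Conjunction of a list of formulas (empty conjunction is `¬⊥`). -/
def bigAnd : List Fml → Fml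
  | [] => Fml.neg Fml.bot
  | [φ] => φ
  | φ :: ψ :: rest => Fml.and φ (bigAnd (ψ :: rest))

/-- Disjunction of a list of formulas (the empty disjunction is the fixed
contradiction `⊥`). -/
def bigOr : List Fml → Fml
  | [] => Fml.bot
  | [φ] => φ
  | φ :: ψ :: rest => Fml.or φ (bigOr (ψ :: rest))

/-- The axiom schema `Min_n`: all instances
`(◇N(x_1) ∧ … ∧ ◇N(x_n)) → ◇(N(x_1) ∧ … ∧ N(x_n))` obtained by substituting
arbitrary (not necessarily distinct) variables for `x_1, …, x_n`. -/
def MinAx (n : ℕ) : Set Fml :=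
  { φ | ∃ l : List ℕ, l.length = n ∧
      φ = imp (bigAnd (l.map (fun x => dia (Nf x)))) (dia (bigAnd (l.map Nf))) }

/-- A formula is extensional if it contains no `□`. -/
def Extensional : Fml → Prop
  | tt _ => True
  | ff _ => True
  | Fml.neg φ => Extensional φ
  | Fml.and φ ψ => Extensional φ ∧ Extensional ψ
  | box _ => False

/-- A formula is intensional if every atomic subformula occurs within the
scope of a `□`. -/
def Intensional : Fml → Prop
  | tt _ => False
  | ff _ => False
  | Fml.neg φ => Intensional φ
  | Fml.and φ ψ => Intensional φ ∧ Intensional ψ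
  | box _ => True

/-- The set of variables occurring in a formula. -/
def vars : Fml → Set ℕ
  | tt x => {x}
  | ff x => {x}
  | Fml.neg φ => vars φ
  | Fml.and φ ψ => vars φ ∪ vars ψ
  | box φ => vars φ

/-- An `n`-formula: one whose atoms use only the variables `x_1, …, x_n`. -/
def IsNFormula (n : ℕ) (φ : Fml) : Prop := vars φ ⊆ {x | 1 ≤ x ∧ x ≤ n}

/-- A 1-formula: one whose atoms use only the single variable `x_1`. -/
abbrev Is1Formula (φ : Fml) : Prop := IsNFormula 1 φ

/-- `φ` is `Γ`-maximal for the system `S5[Ax]`. -/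
def GammaMaximal (Ax : Set Fml) (Γ : Set Fml) (φ : Fml) : Prop :=
  Consistent (Ax ∪ {φ}) ∧ φ ∈ Γ ∧
    ∀ ψ ∈ Γ, Prv Ax (imp φ ψ) ∨ Prv Ax (imp φ (neg ψ))

/-- Extensional `n`-isolators for `S5[Ax]`. -/
def ExtIsolator (n : ℕ) (Ax : Set Fml) (φ : Fml) : Prop :=
  GammaMaximal Ax {ψ | Extensional ψ ∧ IsNFormula n ψ} φ

/-- Intensional `n`-isolators for `S5[Ax]`. -/
def IntIsolator (n : ℕ) (Ax : Set Fml) (φ : Fml) : Prop :=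
  GammaMaximal Ax {ψ | Intensional ψ ∧ IsNFormula n ψ} φ

/-- An `n`-isolator for `S5[Ax]`: a consistent conjunction `ε ∧ ι` of an
extensional `n`-isolator and an intensional `n`-isolator. -/
def Isolator (n : ℕ) (Ax : Set Fml) (φ : Fml) : Prop :=
  ∃ ε ι, ExtIsolator n Ax ε ∧ IntIsolator n Ax ι ∧
    φ = Fml.and ε ι ∧ Consistent (Ax ∪ {φ})

/-- Satisfaction in a model `(W, V)` (with `V = (V1, V2)`) at a world `w`. -/
def Sat {W : Type*} (V1 V2 : ℕ → Set W) : W → Fml → Prop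
  | w, tt x => w ∈ V1 x
  | w, ff x => w ∈ V2 x
  | w, Fml.neg φ => ¬ Sat V1 V2 w φ
  | w, Fml.and φ ψ => Sat V1 V2 w φ ∧ Sat V1 V2 w ψ
  | _, box φ => ∀ v, Sat V1 V2 v φ

/-- The variable assignment satisfies the `Con` constraint. -/
def ConC {W : Type*} (V1 V2 : ℕ → Set W) : Prop := ∀ x, V1 x ∩ V2 x = ∅

/-- The variable assignment satisfies the `Ground` constraint. -/
def GroundC {W : Type*} (V1 V2 : ℕ → Set W) : Prop :=
  ∀ x, (V1 x).Nonempty → (V2 x).Nonempty → ((V1 x ∪ V2 x)ᶜ : Set W).Nonempty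

/-- The variable assignment satisfies the `Min` constraint. -/
def MinC {W : Type*} (V1 V2 : ℕ → Set W) : Prop :=
  ∀ l : List ℕ, l ≠ [] → (∀ x ∈ l, ((V1 x ∪ V2 x)ᶜ : Set W).Nonempty) →
    (⋂ x ∈ l, ((V1 x ∪ V2 x)ᶜ : Set W)).Nonempty

/-- The prime conditions for a subset `S` of the tensor `[3]^n`, realized as
`Fin n → Fin 3` where the value `0` stands for the layer `T`, `1` for `F`,
and `2` for `N` (i.e. `1, 2, 3` in the paper's numbering). -/
def PrimeConditions (n : ℕ) (S : Set (Fin n → Fin 3)) : Prop :=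
  S.Nonempty ∧
  (∀ j : Fin n, (S ∩ {a | a j = 0}).Nonempty → (S ∩ {a | a j = 1}).Nonempty →
      (S ∩ {a | a j = 2}).Nonempty) ∧
  ∀ J : Set (Fin n), J.Nonempty →
    (∀ j ∈ J, (S ∩ {a | a j = 2}).Nonempty) →
    (S ∩ ⋂ j ∈ J, {a | a j = 2}).Nonempty

/-- `χ_1 = T`, `χ_2 = F`, `χ_3 = N` (with `Fin 3` values `0, 1, 2`). -/
def chi (k : Fin 3) (x : ℕ) : Fml :=
  if k = 0 then tt x else if k = 1 then ff x else Nf x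

/-- The extensional `n`-isolator `φ_a = χ_{a_1}(x_1) ∧ … ∧ χ_{a_n}(x_n)`
associated with a tuple `a ∈ [3]^n`. -/
def tupleFml {n : ℕ} (a : Fin n → Fin 3) : Fml :=
  bigAnd ((List.finRange n).map (fun i => chi (a i) (i.1 + 1)))

open Classical in
/-- The pre-`n`-isolator of `S ⊆ [3]^n`:
`⋀_{a ∈ S} ◇φ_a ∧ ⋀_{a ∉ S} ¬◇φ_a`. -/
noncomputable def preIsolator (n : ℕ) (S : Set (Fin n → Fin 3)) : Fml :=
  bigAnd (((Finset.univ : Finset (Fin n → Fin 3)).toList).map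
    (fun a => if a ∈ S then dia (tupleFml a) else Fml.neg (dia (tupleFml a))))


section Combinators

variable {Ax : Set Fml}

lemma prv_syl {X A B : Fml} (h1 : Prv Ax (imp X A)) (h2 : Prv Ax (imp A B)) :
    Prv Ax (imp X B) := by
  have t : Tautology (imp (imp X A) (imp (imp A B) (imp X B))) := by
    intro v; simp only [imp, evalProp]
    cases evalProp v A <;> cases evalProp v B <;> cases evalProp v X <;> rfl
  exact (Prv.taut t).mp h1 |>.mp h2

lemma prv_weaken {X A : Fml} (h : Prv Ax A) : Prv Ax (imp X A) := by
  have t : Tautology (imp A (imp X A)) := by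
    intro v; simp only [imp, evalProp]
    cases evalProp v A <;> cases evalProp v X <;> rfl
  exact (Prv.taut t).mp h

lemma prv_imp_refl (X : Fml) : Prv Ax (imp X X) := by
  apply Prv.taut; intro v; simp only [imp, evalProp]
  cases evalProp v X <;> rfl

lemma prv_and_intro {X A B : Fml} (h1 : Prv Ax (imp X A)) (h2 : Prv Ax (imp X B)) :
    Prv Ax (imp X (Fml.and A B)) := by
  have t : Tautology (imp (imp X A) (imp (imp X B) (imp X (Fml.and A B)))) := by
    intro v; simp only [imp, evalProp]
    cases evalProp v A <;> cases evalProp v B <;> cases evalProp v X <;> rfl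
  exact (Prv.taut t).mp h1 |>.mp h2

lemma prv_and_left (A B : Fml) : Prv Ax (imp (Fml.and A B) A) := by
  apply Prv.taut; intro v; simp only [imp, evalProp]
  cases evalProp v A <;> cases evalProp v B <;> rfl

lemma prv_and_right (A B : Fml) : Prv Ax (imp (Fml.and A B) B) := by
  apply Prv.taut; intro v; simp only [imp, evalProp]
  cases evalProp v A <;> cases evalProp v B <;> rfl

lemma prv_contra {X A : Fml} (h : Prv Ax (imp X (Fml.neg A))) :
    Prv Ax (imp A (Fml.neg X)) := by
  have t : Tautology (imp (imp X (Fml.neg A)) (imp A (Fml.neg X))) := by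
    intro v; simp only [imp, evalProp]
    cases evalProp v A <;> cases evalProp v X <;> rfl
  exact (Prv.taut t).mp h

lemma prv_neg_self {X : Fml} (h : Prv Ax (imp X (Fml.neg X))) : Prv Ax (Fml.neg X) := by
  have t : Tautology (imp (imp X (Fml.neg X)) (Fml.neg X)) := by
    intro v; simp only [imp, evalProp]
    cases evalProp v X <;> rfl
  exact (Prv.taut t).mp h

lemma prv_cut_hyp {X B C : Fml} (hB : Prv Ax B)
    (h : Prv Ax (imp (Fml.and X B) C)) : Prv Ax (imp X C) := by
  have t : Tautology (imp B (imp (imp (Fml.and X B) C) (imp X C))) := by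
    intro v; simp only [imp, evalProp]
    cases evalProp v B <;> cases evalProp v C <;> cases evalProp v X <;> rfl
  exact ((Prv.taut t).mp hB).mp h

lemma bigAnd_cons (φ : Fml) {l : List Fml} (h : l ≠ []) :
    bigAnd (φ :: l) = Fml.and φ (bigAnd l) := by
  cases l with
  | nil => exact absurd rfl h
  | cons ψ r => rfl

lemma bigOr_cons (φ : Fml) {l : List Fml} (h : l ≠ []) :
    bigOr (φ :: l) = Fml.or φ (bigOr l) := by
  cases l with
  | nil => exact absurd rfl h
  | cons ψ r => rfl

lemma prv_bigAnd_elim {l : List Fml} {φ : Fml} (h : φ ∈ l) :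
    Prv Ax (imp (bigAnd l) φ) := by
  induction l with
  | nil => simp at h
  | cons ψ r ih =>
    cases r with
    | nil =>
      simp at h; subst h; exact prv_imp_refl _
    | cons ψ' r' =>
      rw [bigAnd_cons _ (by simp)]
      rcases List.mem_cons.mp h with h | h
      · subst h; exact prv_and_left _ _
      · exact prv_syl (prv_and_right _ _) (ih h)

lemma prv_bigAnd_intro {X : Fml} {l : List Fml} (h : ∀ φ ∈ l, Prv Ax (imp X φ)) :
    Prv Ax (imp X (bigAnd l)) := by
  induction l with
  | nil =>
    apply prv_weaken; apply Prv.taut; intro v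
    simp only [bigAnd, Fml.bot, evalProp]
    cases v (tt 0) <;> rfl
  | cons ψ r ih =>
    cases r with
    | nil => exact h ψ (by simp)
    | cons ψ' r' =>
      rw [bigAnd_cons _ (by simp)]
      exact prv_and_intro (h ψ (by simp)) (ih (fun φ hφ => h φ (by simp [hφ])))

lemma prv_bigAnd_of_all {l : List Fml} (h : ∀ φ ∈ l, Prv Ax φ) : Prv Ax (bigAnd l) := by
  have h1 : Prv Ax (imp (Fml.neg Fml.bot) (bigAnd l)) :=
    prv_bigAnd_intro (fun φ hφ => prv_weaken (h φ hφ))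
  refine h1.mp ?_
  apply Prv.taut; intro v; simp only [Fml.bot, evalProp]
  cases v (tt 0) <;> rfl

lemma prv_bigOr_elim {Y : Fml} {l : List Fml} (h : ∀ φ ∈ l, Prv Ax (imp φ Y)) :
    Prv Ax (imp (bigOr l) Y) := by
  induction l with
  | nil =>
    apply Prv.taut; intro v
    simp only [bigOr, imp, Fml.bot, evalProp]
    cases v (tt 0) <;> cases evalProp v Y <;> rfl
  | cons ψ r ih =>
    cases r with
    | nil => exact h ψ (by simp)
    | cons ψ' r' =>
      rw [bigOr_cons _ (by simp)]
      have h1 := h ψ (by simp)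
      have h2 := ih (fun φ hφ => h φ (by simp [hφ]))
      have t : Tautology (imp (imp ψ Y) (imp (imp (bigOr (ψ' :: r')) Y)
          (imp (Fml.or ψ (bigOr (ψ' :: r'))) Y))) := by
        intro v; simp only [imp, Fml.or, evalProp]
        cases evalProp v ψ <;> cases evalProp v (bigOr (ψ' :: r')) <;>
          cases evalProp v Y <;> rfl
      exact ((Prv.taut t).mp h1).mp h2

end Combinators
section Modal

variable {Ax : Set Fml}

lemma prv_box_mono {A B : Fml} (h : Prv Ax (imp A B)) :
    Prv Ax (imp (box A) (box B)) :=
  (Prv.axK A B).mp h.nec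

lemma prv_dia_mono {A B : Fml} (h : Prv Ax (imp A B)) :
    Prv Ax (imp (dia A) (dia B)) := by
  have h1 : Prv Ax (imp (Fml.neg B) (Fml.neg A)) := by
    have t : Tautology (imp (imp A B) (imp (Fml.neg B) (Fml.neg A))) := by
      intro v; simp only [imp, evalProp]
      cases evalProp v A <;> cases evalProp v B <;> rfl
    exact (Prv.taut t).mp h
  have h2 := prv_box_mono h1
  -- dia A = neg (box (neg A));  (□¬B → □¬A) → (¬□¬A → ¬□¬B)
  have t : Tautology (imp (imp (box (Fml.neg B)) (box (Fml.neg A))) (imp (dia A) (dia B))) := by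
    intro v; simp only [imp, dia, evalProp]
    cases v (box (Fml.neg A)) <;> cases v (box (Fml.neg B)) <;> rfl
  exact (Prv.taut t).mp h2

lemma prv_T_dual (A : Fml) : Prv Ax (imp A (dia A)) := by
  have h := Prv.axT (Ax := Ax) (Fml.neg A)
  have t : Tautology (imp (imp (box (Fml.neg A)) (Fml.neg A)) (imp A (dia A))) := by
    intro v; simp only [imp, dia, evalProp]
    cases v (box (Fml.neg A)) <;> cases evalProp v A <;> rfl
  exact (Prv.taut t).mp h

/-- `□B → (◇A → ◇(B ∧ A))` -/
lemma prv_dia_box_and {A B : Fml} (hB : Prv Ax (box B)) :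
    Prv Ax (imp (dia A) (dia (Fml.and B A))) := by
  have h1 : Prv Ax (imp B (imp (Fml.neg (Fml.and B A)) (Fml.neg A))) := by
    apply Prv.taut; intro v; simp only [imp, evalProp]
    cases evalProp v A <;> cases evalProp v B <;> rfl
  have h2 : Prv Ax (imp (box B) (box (imp (Fml.neg (Fml.and B A)) (Fml.neg A)))) :=
    prv_box_mono h1
  have h3 : Prv Ax (box (imp (Fml.neg (Fml.and B A)) (Fml.neg A))) := h2.mp hB
  have h4 : Prv Ax (imp (box (Fml.neg (Fml.and B A))) (box (Fml.neg A))) :=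
    (Prv.axK _ _).mp h3
  have t : Tautology (imp (imp (box (Fml.neg (Fml.and B A))) (box (Fml.neg A)))
      (imp (dia A) (dia (Fml.and B A)))) := by
    intro v; simp only [imp, dia, evalProp]
    cases v (box (Fml.neg (Fml.and B A))) <;> cases v (box (Fml.neg A)) <;> rfl
  exact (Prv.taut t).mp h4

lemma prv_box_and_intro {A B : Fml} :
    Prv Ax (imp (Fml.and (box A) (box B)) (box (Fml.and A B))) := by
  have h1 : Prv Ax (imp A (imp B (Fml.and A B))) := by
    apply Prv.taut; intro v; simp only [imp, evalProp]
    cases evalProp v A <;> cases evalProp v B <;> rfl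
  have h2 : Prv Ax (imp (box A) (box (imp B (Fml.and A B)))) := prv_box_mono h1
  have h3 : Prv Ax (imp (box (imp B (Fml.and A B))) (imp (box B) (box (Fml.and A B)))) :=
    Prv.axK _ _
  have h4 : Prv Ax (imp (box A) (imp (box B) (box (Fml.and A B)))) := prv_syl h2 h3
  have t : Tautology (imp (imp (box A) (imp (box B) (box (Fml.and A B))))
      (imp (Fml.and (box A) (box B)) (box (Fml.and A B)))) := by
    intro v; simp only [imp, evalProp]
    cases v (box A) <;> cases v (box B) <;> cases v (box (Fml.and A B)) <;> rfl
  exact (Prv.taut t).mp h4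

lemma prv_dia_or {A B : Fml} :
    Prv Ax (imp (dia (Fml.or A B)) (Fml.or (dia A) (dia B))) := by
  have h1 : Prv Ax (imp (Fml.and (Fml.neg A) (Fml.neg B)) (Fml.neg (Fml.or A B))) := by
    apply Prv.taut; intro v; simp only [imp, Fml.or, evalProp]
    cases evalProp v A <;> cases evalProp v B <;> rfl
  have h2 : Prv Ax (imp (Fml.and (box (Fml.neg A)) (box (Fml.neg B)))
      (box (Fml.neg (Fml.or A B)))) :=
    prv_syl prv_box_and_intro (prv_box_mono h1)
  have t : Tautology (imp (imp (Fml.and (box (Fml.neg A)) (box (Fml.neg B)))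
      (box (Fml.neg (Fml.or A B))))
      (imp (dia (Fml.or A B)) (Fml.or (dia A) (dia B)))) := by
    intro v; simp only [imp, dia, Fml.or, evalProp]
    cases v (box (Fml.neg A)) <;> cases v (box (Fml.neg B)) <;>
      cases v (box (Fml.neg (Fml.neg (Fml.and (Fml.neg A) (Fml.neg B))))) <;> rfl
  exact (Prv.taut t).mp h2

lemma prv_dia_bigOr {l : List Fml} :
    Prv Ax (imp (dia (bigOr l)) (bigOr (l.map dia))) := by
  induction l with
  | nil =>
    simp only [List.map_nil]
    -- dia bot → bot : since ¬bot provable, box ¬bot provable, so ¬ dia bot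
    have h1 : Prv Ax (box (Fml.neg Fml.bot)) := by
      apply Prv.nec; apply Prv.taut; intro v
      simp only [Fml.bot, evalProp]; cases v (tt 0) <;> rfl
    have t : Tautology (imp (box (Fml.neg Fml.bot))
        (imp (dia Fml.bot) Fml.bot)) := by
      intro v; simp only [imp, dia, Fml.bot, evalProp]
      cases v (box (Fml.neg (Fml.and (tt 0) (Fml.neg (tt 0))))) <;> cases v (tt 0) <;> rfl
    exact (Prv.taut t).mp h1
  | cons φ r ih =>
    cases r with
    | nil => simp only [List.map_cons, List.map_nil, bigOr]; exact prv_imp_refl _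
    | cons ψ r' =>
      rw [bigOr_cons _ (by simp), List.map_cons,
        bigOr_cons (dia φ) (l := (ψ :: r').map dia) (by simp)]
      refine prv_syl (prv_dia_or) ?_
      -- or (dia φ) (dia (bigOr (ψ::r'))) → or (dia φ) (bigOr (map dia (ψ::r')))
      have t : Tautology (imp (imp (dia (bigOr (ψ :: r'))) (bigOr ((ψ :: r').map dia)))
          (imp (Fml.or (dia φ) (dia (bigOr (ψ :: r'))))
            (Fml.or (dia φ) (bigOr ((ψ :: r').map dia))))) := by
        intro v; simp only [imp, Fml.or, dia, evalProp]
        cases v (box (Fml.neg φ)) <;> cases v (box (Fml.neg (bigOr (ψ :: r')))) <;>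
          cases evalProp v (bigOr ((ψ :: r').map dia)) <;> rfl
      exact (Prv.taut t).mp ih

end Modal
section Semantics

variable {W : Type} (V1 V2 : ℕ → Set W)

lemma sat_imp {w : W} {A B : Fml} :
    Sat V1 V2 w (imp A B) ↔ (Sat V1 V2 w A → Sat V1 V2 w B) := by
  simp only [imp, Sat]; tauto

lemma sat_dia {w : W} {A : Fml} :
    Sat V1 V2 w (dia A) ↔ ∃ u, Sat V1 V2 u A := by
  simp only [dia, Sat]
  rw [not_forall]
  simp only [not_not]

lemma sat_bigAnd {w : W} {l : List Fml} :
    Sat V1 V2 w (bigAnd l) ↔ ∀ φ ∈ l, Sat V1 V2 w φ := by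
  induction l with
  | nil => simp [bigAnd, Fml.bot, Sat]
  | cons φ r ih =>
    cases r with
    | nil => simp [bigAnd]
    | cons ψ r' =>
      rw [bigAnd_cons _ (by simp)]
      simp only [Sat, ih, List.mem_cons]
      constructor
      · rintro ⟨h1, h2⟩ χ (rfl | h)
        · exact h1
        · exact h2 _ (by simpa using h)
      · intro h
        exact ⟨h φ (Or.inl rfl), fun χ hχ => h χ (Or.inr hχ)⟩

open Classical in
lemma sat_evalProp (w : W) (φ : Fml) :
    evalProp (fun ψ => decide (Sat V1 V2 w ψ)) φ = true ↔ Sat V1 V2 w φ := by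
  induction φ with
  | tt x => simp [evalProp]
  | ff x => simp [evalProp]
  | box ψ ih => simp [evalProp]
  | neg ψ ih => simp only [evalProp, Bool.not_eq_true', Sat]; rw [← ih]; simp
  | and ψ χ ih1 ih2 => simp only [evalProp, Bool.and_eq_true, Sat]; rw [ih1, ih2]

theorem soundness {n : ℕ} (hn : 1 ≤ n)
    (hC : ConC V1 V2) (hG : GroundC V1 V2) (hM : MinC V1 V2) {φ : Fml}
    (h : Prv (ConAx ∪ GroundAx ∪ MinAx n) φ) : ∀ w : W, Sat V1 V2 w φ := by
  induction h with
  | @taut ψ hψ =>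
    intro w
    have := hψ (fun χ => @decide (Sat V1 V2 w χ) (Classical.propDecidable _))
    exact (sat_evalProp V1 V2 w ψ).mp this
  | axK A B =>
    intro w
    rw [sat_imp]; intro h1; rw [sat_imp]; intro h2
    intro u
    exact (sat_imp V1 V2).mp (h1 u) (h2 u)
  | axT A =>
    intro w
    rw [sat_imp]; intro h1; exact h1 w
  | ax5 A =>
    intro w
    rw [sat_imp]; intro h1
    intro u
    rw [sat_dia] at h1 ⊢
    exact h1
  | @axm ψ hψ =>
    intro w
    rcases hψ with (hψ | hψ) | hψ
    · obtain ⟨x, rfl⟩ := hψ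
      have hcx := hC x
      rintro ⟨h2, h3⟩
      exact absurd (Set.mem_inter h2 h3) (by rw [hcx]; simp)
    · obtain ⟨x, rfl⟩ := hψ
      rw [sat_imp]
      rintro ⟨h1, h2⟩
      rw [sat_dia] at h1 h2 ⊢
      obtain ⟨u1, hu1⟩ := h1
      obtain ⟨u2, hu2⟩ := h2
      obtain ⟨u, hu⟩ := hG x ⟨u1, hu1⟩ ⟨u2, hu2⟩
      exact ⟨u, fun hc => hu (Or.inl hc), fun hc => hu (Or.inr hc)⟩
    · obtain ⟨l, hl, rfl⟩ := hψ
      rw [sat_imp]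
      intro h1
      rw [sat_bigAnd] at h1
      have hne : l ≠ [] := by
        intro hc; rw [hc] at hl; simp at hl; omega
      have hcomp : ∀ x ∈ l, ((V1 x ∪ V2 x)ᶜ : Set W).Nonempty := by
        intro x hx
        have := h1 (dia (Nf x)) (List.mem_map_of_mem hx)
        rw [sat_dia] at this
        obtain ⟨u, hu1, hu2⟩ := this
        exact ⟨u, fun hc => by rcases hc with hc | hc; exact hu1 hc; exact hu2 hc⟩
      obtain ⟨u, hu⟩ := hM l hne hcomp
      rw [sat_dia]
      refine ⟨u, ?_⟩
      rw [sat_bigAnd]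
      intro χ hχ
      rw [List.mem_map] at hχ
      obtain ⟨x, hx, rfl⟩ := hχ
      simp only [Set.mem_iInter] at hu
      exact ⟨fun hc => hu x hx (Or.inl hc), fun hc => hu x hx (Or.inr hc)⟩
  | mp h1 h2 ih1 ih2 =>
    intro w
    exact (sat_imp V1 V2).mp (ih1 w) (ih2 w)
  | nec h ih =>
    intro w u; exact ih u

end Semantics
section Model

lemma fin3_eq_two {a : Fin 3} (h0 : a ≠ 0) (h1 : a ≠ 1) : a = 2 := by
  fin_cases a <;> simp_all

variable {n : ℕ} {S : Set (Fin n → Fin 3)}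

/-- The valuation on the canonical model with worlds `S`. -/
def vSet (S : Set (Fin n → Fin 3)) (k : Fin 3) (x : ℕ) : Set {a : Fin n → Fin 3 // a ∈ S} :=
  {w | ∃ h : x - 1 < n ∧ 1 ≤ x, w.1 ⟨x - 1, h.1⟩ = k}

lemma mem_vSet_iff (k : Fin 3) (i : Fin n) (w : {a : Fin n → Fin 3 // a ∈ S}) :
    w ∈ vSet S k (i.1 + 1) ↔ w.1 i = k := by
  constructor
  · rintro ⟨h, hw⟩
    exact hw
  · intro hw
    exact ⟨⟨by simp [i.2], by omega⟩, hw⟩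

lemma vSet_empty_of_out {k : Fin 3} {x : ℕ} (h : ¬(1 ≤ x ∧ x ≤ n)) :
    vSet S k x = ∅ := by
  ext w
  simp only [vSet, Set.mem_setOf_eq, Set.mem_empty_iff_false, iff_false]
  rintro ⟨⟨h1, h2⟩, -⟩
  exact h ⟨h2, by omega⟩

lemma compl_vSet {x : ℕ} (h : 1 ≤ x ∧ x ≤ n) (w : {a : Fin n → Fin 3 // a ∈ S}) :
    w ∈ ((vSet S 0 x ∪ vSet S 1 x)ᶜ : Set _) ↔ w.1 ⟨x - 1, by omega⟩ = 2 := by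
  have hidx : x - 1 < n := by omega
  constructor
  · intro hw
    apply fin3_eq_two
    · intro hc; exact hw (Or.inl ⟨⟨hidx, h.1⟩, hc⟩)
    · intro hc; exact hw (Or.inr ⟨⟨hidx, h.1⟩, hc⟩)
  · intro hw
    rintro (⟨h1, hc⟩ | ⟨h1, hc⟩) <;> rw [hw] at hc <;> exact absurd hc (by decide)

lemma model_ConC : ConC (vSet S 0) (vSet S 1) := by
  intro x
  ext w
  simp only [Set.mem_inter_iff, Set.mem_empty_iff_false, iff_false]
  rintro ⟨⟨h1, hw1⟩, ⟨h2, hw2⟩⟩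
  rw [hw1] at hw2
  exact absurd hw2 (by decide)

lemma model_GroundC (hp : PrimeConditions n S) : GroundC (vSet S 0) (vSet S 1) := by
  intro x h1 h2
  by_cases hx : 1 ≤ x ∧ x ≤ n
  · have hidx : x - 1 < n := by omega
    set j : Fin n := ⟨x - 1, hidx⟩
    have hS1 : (S ∩ {a | a j = 0}).Nonempty := by
      obtain ⟨w, hw⟩ := h1
      obtain ⟨h, hw2⟩ := hw
      exact ⟨w.1, w.2, hw2⟩
    have hS2 : (S ∩ {a | a j = 1}).Nonempty := by
      obtain ⟨w, hw⟩ := h2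
      obtain ⟨h, hw2⟩ := hw
      exact ⟨w.1, w.2, hw2⟩
    obtain ⟨a, ha, ha2⟩ := hp.2.1 j hS1 hS2
    refine ⟨⟨a, ha⟩, ?_⟩
    rw [compl_vSet hx]
    exact ha2
  · obtain ⟨w, hw⟩ := h1
    rw [vSet_empty_of_out hx] at hw
    exact absurd hw (Set.notMem_empty w)

lemma model_MinC (hp : PrimeConditions n S) : MinC (vSet S 0) (vSet S 1) := by
  intro l hl hcomp
  classical
  set J : Set (Fin n) := {j | (j.1 + 1) ∈ l} with hJ
  have hmem : ∀ w : {a : Fin n → Fin 3 // a ∈ S},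
      (∀ j ∈ J, w.1 j = 2) → w ∈ ⋂ x ∈ l, ((vSet S 0 x ∪ vSet S 1 x)ᶜ : Set _) := by
    intro w hw
    simp only [Set.mem_iInter]
    intro x hx
    by_cases hxr : 1 ≤ x ∧ x ≤ n
    · rw [compl_vSet hxr]
      have hj : (⟨x - 1, by omega⟩ : Fin n) ∈ J := by
        simp only [hJ, Set.mem_setOf_eq]
        have : x - 1 + 1 = x := by omega
        rw [this]; exact hx
      exact hw _ hj
    · rw [vSet_empty_of_out (k := 0) hxr, vSet_empty_of_out (k := 1) hxr]
      simp
  rcases Set.eq_empty_or_nonempty J with hJe | hJn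
  · obtain ⟨a, ha⟩ := hp.1
    refine ⟨⟨a, ha⟩, hmem _ ?_⟩
    intro j hj
    rw [hJe] at hj
    exact absurd hj (Set.notMem_empty j)
  · have hstep : ∀ j ∈ J, (S ∩ {a | a j = 2}).Nonempty := by
      intro j hj
      obtain ⟨w, hw⟩ := hcomp (j.1 + 1) hj
      have hxr : 1 ≤ j.1 + 1 ∧ j.1 + 1 ≤ n := ⟨by omega, by omega⟩
      rw [compl_vSet hxr] at hw
      exact ⟨w.1, w.2, hw⟩
    obtain ⟨a, ha, ha2⟩ := hp.2.2 J hJn hstep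
    simp only [Set.mem_iInter] at ha2
    exact ⟨⟨a, ha⟩, hmem _ (fun j hj => ha2 j hj)⟩

lemma sat_chi (k : Fin 3) (i : Fin n) (w : {a : Fin n → Fin 3 // a ∈ S}) :
    Sat (vSet S 0) (vSet S 1) w (chi k (i.1 + 1)) ↔ w.1 i = k := by
  fin_cases k
  · exact mem_vSet_iff 0 i w
  · exact mem_vSet_iff 1 i w
  · show (¬ w ∈ vSet S 0 (i.1+1) ∧ ¬ w ∈ vSet S 1 (i.1+1)) ↔ _
    rw [mem_vSet_iff, mem_vSet_iff]
    constructor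
    · rintro ⟨h0, h1⟩; exact fin3_eq_two h0 h1
    · intro h; rw [h]; exact ⟨by decide, by decide⟩

lemma sat_tupleFml (a : Fin n → Fin 3) (w : {b : Fin n → Fin 3 // b ∈ S}) :
    Sat (vSet S 0) (vSet S 1) w (tupleFml a) ↔ w.1 = a := by
  rw [tupleFml, sat_bigAnd]
  constructor
  · intro h
    funext i
    have := h _ (List.mem_map_of_mem (List.mem_finRange i))
    exact (sat_chi (a i) i w).mp this
  · intro h φ hφ
    rw [List.mem_map] at hφ
    obtain ⟨i, -, rfl⟩ := hφ
    rw [sat_chi]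
    rw [h]

lemma sat_preIsolator (w : {b : Fin n → Fin 3 // b ∈ S}) :
    Sat (vSet S 0) (vSet S 1) w (preIsolator n S) := by
  classical
  rw [preIsolator, sat_bigAnd]
  intro φ hφ
  rw [List.mem_map] at hφ
  obtain ⟨a, -, rfl⟩ := hφ
  by_cases ha : a ∈ S
  · rw [if_pos ha, sat_dia]
    exact ⟨⟨a, ha⟩, (sat_tupleFml a _).mpr rfl⟩
  · rw [if_neg ha]
    show ¬ _
    rw [sat_dia]
    rintro ⟨u, hu⟩
    rw [sat_tupleFml] at hu
    exact ha (hu ▸ u.2)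

theorem prime_to_consistent (hn : 1 ≤ n) (hp : PrimeConditions n S) :
    ¬ Prv (ConAx ∪ GroundAx ∪ MinAx n) (Fml.neg (preIsolator n S)) := by
  intro hprv
  obtain ⟨a, ha⟩ := hp.1
  have hs := soundness (vSet S 0) (vSet S 1) hn model_ConC
    (model_GroundC hp) (model_MinC hp) hprv ⟨a, ha⟩
  exact hs (sat_preIsolator ⟨a, ha⟩)

end Model
section Syntactic

lemma chi_zero (x : ℕ) : chi 0 x = tt x := rfl
lemma chi_one (x : ℕ) : chi 1 x = ff x := rfl
lemma chi_two (x : ℕ) : chi 2 x = Nf x := rfl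

lemma evalProp_imp_true {v : Fml → Bool} {A B : Fml} :
    evalProp v (imp A B) = true ↔ (evalProp v A = true → evalProp v B = true) := by
  simp only [imp, evalProp]
  cases evalProp v A <;> cases evalProp v B <;> simp

lemma evalProp_and_true {v : Fml → Bool} {A B : Fml} :
    evalProp v (Fml.and A B) = true ↔ (evalProp v A = true ∧ evalProp v B = true) := by
  simp only [evalProp]
  cases evalProp v A <;> cases evalProp v B <;> simp

lemma evalProp_bigAnd_true {v : Fml → Bool} {l : List Fml} :
    evalProp v (bigAnd l) = true ↔ ∀ φ ∈ l, evalProp v φ = true := by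
  induction l with
  | nil =>
    simp only [bigAnd, Fml.bot, evalProp, List.not_mem_nil]
    cases v (tt 0) <;> simp
  | cons φ r ih =>
    cases r with
    | nil => simp [bigAnd]
    | cons ψ r' =>
      rw [bigAnd_cons _ (by simp), evalProp_and_true, ih]
      constructor
      · rintro ⟨h1, h2⟩ χ hχ
        rcases List.mem_cons.mp hχ with rfl | h
        · exact h1
        · exact h2 _ h
      · intro h
        exact ⟨h φ (by simp), fun χ hχ => h χ (by simp [hχ])⟩

lemma evalProp_bigOr_true {v : Fml → Bool} {l : List Fml} :
    evalProp v (bigOr l) = true ↔ ∃ φ ∈ l, evalProp v φ = true := by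
  induction l with
  | nil =>
    simp only [bigOr, Fml.bot, evalProp, List.not_mem_nil]
    cases v (tt 0) <;> simp
  | cons φ r ih =>
    cases r with
    | nil => simp [bigOr]
    | cons ψ r' =>
      rw [bigOr_cons _ (by simp)]
      simp only [Fml.or, evalProp, List.mem_cons]
      rw [Bool.not_eq_true', Bool.and_eq_false_iff] at *
      constructor
      · rintro (h | h)
        · exact ⟨φ, Or.inl rfl, by simpa using h⟩
        · obtain ⟨χ, hχ, h2⟩ := ih.mp (by simpa using h)
          exact ⟨χ, Or.inr (List.mem_cons.mp hχ), h2⟩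
      · rintro ⟨χ, (rfl | hχ), h2⟩
        · left; simpa using h2
        · right; simpa using ih.mpr ⟨χ, List.mem_cons.mpr hχ, h2⟩

/-- The `Con` instances for variables `x_1, …, x_n`. -/
def conList (n : ℕ) : List Fml :=
  (List.finRange n).map (fun i => Fml.neg (Fml.and (tt (i.1 + 1)) (ff (i.1 + 1))))

lemma prv_conBig (n : ℕ) : Prv (ConAx ∪ GroundAx ∪ MinAx n) (bigAnd (conList n)) := by
  apply prv_bigAnd_of_all
  intro φ hφ
  rw [conList, List.mem_map] at hφ
  obtain ⟨i, -, rfl⟩ := hφ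
  exact Prv.axm (Or.inl (Or.inl ⟨i.1 + 1, rfl⟩))

/-- The tuple determined by a propositional valuation. -/
def tupleOf (n : ℕ) (v : Fml → Bool) : Fin n → Fin 3 := fun i =>
  if v (tt (i.1 + 1)) then 0 else if v (ff (i.1 + 1)) then 1 else 2

lemma evalProp_tupleFml_self {n : ℕ} {v : Fml → Bool}
    (hcon : evalProp v (bigAnd (conList n)) = true) :
    evalProp v (tupleFml (tupleOf n v)) = true := by
  rw [tupleFml, evalProp_bigAnd_true]
  intro φ hφ
  rw [List.mem_map] at hφ
  obtain ⟨i, -, rfl⟩ := hφ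
  rw [evalProp_bigAnd_true] at hcon
  have hci := hcon _ (List.mem_map_of_mem (List.mem_finRange i))
  simp only [evalProp, Bool.not_eq_true', Bool.and_eq_false_iff] at hci
  rcases h1 : v (tt (i.1 + 1)) with _ | _ <;> rcases h2 : v (ff (i.1 + 1)) with _ | _
  · show evalProp v (chi _ _) = true
    rw [show tupleOf n v i = 2 by rw [tupleOf]; simp [h1, h2], chi_two]
    simp [Nf, evalProp, h1, h2]
  · show evalProp v (chi _ _) = true
    rw [show tupleOf n v i = 1 by rw [tupleOf]; simp [h1, h2], chi_one]
    simp [evalProp, h2]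
  · show evalProp v (chi _ _) = true
    rw [show tupleOf n v i = 0 by rw [tupleOf]; simp [h1], chi_zero]
    simp [evalProp, h1]
  · rw [h1, h2] at hci; simp at hci

lemma key_taut {n : ℕ} (L : List (Fin n → Fin 3)) (H : Fml)
    (hsem : ∀ v : Fml → Bool, evalProp v (bigAnd (conList n)) = true →
      evalProp v H = true → tupleOf n v ∈ L) :
    Tautology (imp (Fml.and (bigAnd (conList n)) H) (bigOr (L.map tupleFml))) := by
  intro v
  rw [evalProp_imp_true, evalProp_and_true]
  rintro ⟨hcon, hH⟩
  rw [evalProp_bigOr_true]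
  exact ⟨tupleFml (tupleOf n v), List.mem_map_of_mem (hsem v hcon hH),
    evalProp_tupleFml_self hcon⟩

lemma key_prv {n : ℕ} (L : List (Fin n → Fin 3)) (H : Fml)
    (hsem : ∀ v : Fml → Bool, evalProp v (bigAnd (conList n)) = true →
      evalProp v H = true → tupleOf n v ∈ L) :
    Prv (ConAx ∪ GroundAx ∪ MinAx n)
      (imp (dia H) (bigOr ((L.map tupleFml).map dia))) := by
  have h1 : Prv (ConAx ∪ GroundAx ∪ MinAx n)
      (imp (dia H) (dia (Fml.and (bigAnd (conList n)) H))) :=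
    prv_dia_box_and (prv_conBig n).nec
  have h2 := prv_dia_mono (Ax := ConAx ∪ GroundAx ∪ MinAx n) (Prv.taut (key_taut L H hsem))
  exact prv_syl (prv_syl h1 h2) prv_dia_bigOr

lemma prv_pre_pos {n : ℕ} {S : Set (Fin n → Fin 3)} {a : Fin n → Fin 3} (ha : a ∈ S) :
    Prv (ConAx ∪ GroundAx ∪ MinAx n) (imp (preIsolator n S) (dia (tupleFml a))) := by
  classical
  have hm : dia (tupleFml a) ∈ ((Finset.univ : Finset (Fin n → Fin 3)).toList).map
      (fun b => if b ∈ S then dia (tupleFml b) else Fml.neg (dia (tupleFml b))) := by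
    rw [List.mem_map]
    exact ⟨a, Finset.mem_toList.mpr (Finset.mem_univ a), by rw [if_pos ha]⟩
  rw [preIsolator]
  convert prv_bigAnd_elim hm using 3

lemma prv_pre_neg {n : ℕ} {S : Set (Fin n → Fin 3)} {a : Fin n → Fin 3} (ha : a ∉ S) :
    Prv (ConAx ∪ GroundAx ∪ MinAx n)
      (imp (preIsolator n S) (Fml.neg (dia (tupleFml a)))) := by
  classical
  have hm : Fml.neg (dia (tupleFml a)) ∈ ((Finset.univ : Finset (Fin n → Fin 3)).toList).map
      (fun b => if b ∈ S then dia (tupleFml b) else Fml.neg (dia (tupleFml b))) := by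
    rw [List.mem_map]
    exact ⟨a, Finset.mem_toList.mpr (Finset.mem_univ a), by rw [if_neg ha]⟩
  rw [preIsolator]
  convert prv_bigAnd_elim hm using 3

lemma prv_tuple_chi {n : ℕ} (a : Fin n → Fin 3) (i : Fin n) {Ax : Set Fml} :
    Prv Ax (imp (tupleFml a) (chi (a i) (i.1 + 1))) :=
  prv_bigAnd_elim (List.mem_map_of_mem (List.mem_finRange i))

lemma prv_neg_pre {n : ℕ} {S : Set (Fin n → Fin 3)} (L : List (Fin n → Fin 3)) (H : Fml)
    (hsem : ∀ v : Fml → Bool, evalProp v (bigAnd (conList n)) = true →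
      evalProp v H = true → tupleOf n v ∈ L)
    (hLS : ∀ a ∈ L, a ∉ S)
    (hpreH : Prv (ConAx ∪ GroundAx ∪ MinAx n) (imp (preIsolator n S) (dia H))) :
    Prv (ConAx ∪ GroundAx ∪ MinAx n) (Fml.neg (preIsolator n S)) := by
  have h1 : Prv (ConAx ∪ GroundAx ∪ MinAx n)
      (imp (preIsolator n S) (bigOr ((L.map tupleFml).map dia))) :=
    prv_syl hpreH (key_prv L H hsem)
  have h2 : ∀ φ ∈ (L.map tupleFml).map dia,
      Prv (ConAx ∪ GroundAx ∪ MinAx n) (imp φ (Fml.neg (preIsolator n S))) := by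
    intro φ hφ
    rw [List.mem_map] at hφ
    obtain ⟨ψ, hψ, rfl⟩ := hφ
    rw [List.mem_map] at hψ
    obtain ⟨a, ha, rfl⟩ := hψ
    exact prv_contra (prv_pre_neg (hLS a ha))
  exact prv_neg_self (prv_syl h1 (prv_bigOr_elim h2))

end Syntactic
section Cases

lemma evalProp_Nf_true {v : Fml → Bool} {x : ℕ} :
    evalProp v (Nf x) = true ↔ v (tt x) = false ∧ v (ff x) = false := by
  simp [Nf, evalProp]

lemma tupleOf_eq_two {n : ℕ} {v : Fml → Bool} {i : Fin n}
    (h1 : v (tt (i.1 + 1)) = false) (h2 : v (ff (i.1 + 1)) = false) :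
    tupleOf n v i = 2 := by
  simp [tupleOf, h1, h2]

lemma case_empty {n : ℕ} {S : Set (Fin n → Fin 3)} (hS : ¬ S.Nonempty) :
    Prv (ConAx ∪ GroundAx ∪ MinAx n) (Fml.neg (preIsolator n S)) := by
  apply prv_neg_pre (Finset.univ : Finset (Fin n → Fin 3)).toList (Fml.neg Fml.bot)
  · intro v _ _
    exact Finset.mem_toList.mpr (Finset.mem_univ _)
  · exact fun a _ ha => hS ⟨a, ha⟩
  · apply prv_weaken
    refine (prv_T_dual _).mp ?_
    apply Prv.taut
    intro v
    simp only [Fml.bot, evalProp]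
    cases v (tt 0) <;> rfl

lemma case_ground {n : ℕ} {S : Set (Fin n → Fin 3)} (j : Fin n)
    (h0 : (S ∩ {a | a j = 0}).Nonempty) (h1 : (S ∩ {a | a j = 1}).Nonempty)
    (h2 : ¬ (S ∩ {a | a j = 2}).Nonempty) :
    Prv (ConAx ∪ GroundAx ∪ MinAx n) (Fml.neg (preIsolator n S)) := by
  classical
  apply prv_neg_pre
    ((Finset.univ : Finset (Fin n → Fin 3)).toList.filter (fun a => decide (a j = 2)))
    (Nf (j.1 + 1))
  · intro v _ hH
    rw [evalProp_Nf_true] at hH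
    rw [List.mem_filter]
    exact ⟨Finset.mem_toList.mpr (Finset.mem_univ _),
      decide_eq_true (tupleOf_eq_two hH.1 hH.2)⟩
  · intro a ha haS
    rw [List.mem_filter] at ha
    exact h2 ⟨a, haS, of_decide_eq_true ha.2⟩
  · obtain ⟨a0, ha0S, ha0j⟩ := h0
    obtain ⟨a1, ha1S, ha1j⟩ := h1
    have t0 := prv_tuple_chi (Ax := ConAx ∪ GroundAx ∪ MinAx n) a0 j
    rw [show a0 j = 0 from ha0j, chi_zero] at t0
    have t1 := prv_tuple_chi (Ax := ConAx ∪ GroundAx ∪ MinAx n) a1 j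
    rw [show a1 j = 1 from ha1j, chi_one] at t1
    have s0 := prv_syl (prv_pre_pos ha0S) (prv_dia_mono t0)
    have s1 := prv_syl (prv_pre_pos ha1S) (prv_dia_mono t1)
    have ground : Prv (ConAx ∪ GroundAx ∪ MinAx n)
        (imp (Fml.and (dia (tt (j.1 + 1))) (dia (ff (j.1 + 1)))) (dia (Nf (j.1 + 1)))) :=
      Prv.axm (Or.inl (Or.inr ⟨j.1 + 1, rfl⟩))
    exact prv_syl (prv_and_intro s0 s1) ground

lemma case_min {n : ℕ} {S : Set (Fin n → Fin 3)} (hn : 1 ≤ n) (J : Set (Fin n))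
    (hJ : J.Nonempty) (hall : ∀ j ∈ J, (S ∩ {a | a j = 2}).Nonempty)
    (hempty : ¬ (S ∩ ⋂ j ∈ J, {a | a j = 2}).Nonempty) :
    Prv (ConAx ∪ GroundAx ∪ MinAx n) (Fml.neg (preIsolator n S)) := by
  classical
  set Jf : Finset (Fin n) := J.toFinset with hJf
  have hJfne : Jf.Nonempty := Set.toFinset_nonempty.mpr hJ
  have hjs : Jf.toList ≠ [] := by
    rw [Ne, Finset.toList_eq_nil]
    exact Finset.nonempty_iff_ne_empty.mp hJfne
  set j0 : Fin n := Jf.toList.head hjs with hj0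
  have hj0J : j0 ∈ J := by
    have := List.head_mem hjs
    rw [Finset.mem_toList] at this
    exact Set.mem_toFinset.mp this
  set base : List ℕ := Jf.toList.map (fun j => j.1 + 1) with hbase
  set l : List ℕ := base ++ List.replicate (n - base.length) (j0.1 + 1) with hl
  have hcard : base.length ≤ n := by
    rw [hbase, List.length_map, Finset.length_toList]
    calc Jf.card ≤ (Finset.univ : Finset (Fin n)).card := Finset.card_le_univ Jf
    _ = n := by simp
  have hlen : l.length = n := by
    rw [hl, List.length_append, List.length_replicate]
    omega
  have hl_mem : ∀ x ∈ l, ∃ j ∈ J, x = j.1 + 1 := by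
    intro x hx
    rw [hl, List.mem_append] at hx
    rcases hx with hx | hx
    · rw [hbase, List.mem_map] at hx
      obtain ⟨j, hj, rfl⟩ := hx
      exact ⟨j, Set.mem_toFinset.mp (Finset.mem_toList.mp hj), rfl⟩
    · exact ⟨j0, hj0J, List.eq_of_mem_replicate hx⟩
  have hl_all : ∀ j ∈ J, j.1 + 1 ∈ l := by
    intro j hj
    rw [hl, List.mem_append]
    left
    rw [hbase, List.mem_map]
    exact ⟨j, Finset.mem_toList.mpr (Set.mem_toFinset.mpr hj), rfl⟩
  apply prv_neg_pre
    ((Finset.univ : Finset (Fin n → Fin 3)).toList.filter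
      (fun a => decide (∀ j ∈ Jf, a j = 2)))
    (bigAnd (l.map Nf))
  · intro v _ hH
    rw [evalProp_bigAnd_true] at hH
    rw [List.mem_filter]
    refine ⟨Finset.mem_toList.mpr (Finset.mem_univ _), decide_eq_true ?_⟩
    intro j hj
    have hjJ : j ∈ J := Set.mem_toFinset.mp hj
    have := hH (Nf (j.1 + 1)) (List.mem_map_of_mem (hl_all j hjJ))
    rw [evalProp_Nf_true] at this
    exact tupleOf_eq_two this.1 this.2
  · intro a ha haS
    rw [List.mem_filter] at ha
    have h2 := of_decide_eq_true ha.2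
    apply hempty
    refine ⟨a, haS, ?_⟩
    simp only [Set.mem_iInter]
    intro j hj
    exact h2 j (Set.mem_toFinset.mpr hj)
  · have minax : Prv (ConAx ∪ GroundAx ∪ MinAx n)
        (imp (bigAnd (l.map (fun x => dia (Nf x)))) (dia (bigAnd (l.map Nf)))) :=
      Prv.axm (Or.inr ⟨l, hlen, rfl⟩)
    refine prv_syl ?_ minax
    apply prv_bigAnd_intro
    intro φ hφ
    rw [List.mem_map] at hφ
    obtain ⟨x, hx, rfl⟩ := hφ
    obtain ⟨j, hjJ, rfl⟩ := hl_mem x hx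
    obtain ⟨a, haS, haj⟩ := hall j hjJ
    have t := prv_tuple_chi (Ax := ConAx ∪ GroundAx ∪ MinAx n) a j
    rw [show a j = 2 from haj, chi_two] at t
    exact prv_syl (prv_pre_pos haS) (prv_dia_mono t)

end Cases
/-- `S ⊆ [3]^n` meets the prime conditions iff its
pre-n-isolator is consistent with S5[Con,Ground,Min_n]. -/
theorem prime_iff_consistent (n : ℕ) (hn : 1 ≤ n) (S : Set (Fin n → Fin 3)) :
    PrimeConditions n S ↔
      ¬ Prv (ConAx ∪ GroundAx ∪ MinAx n) (Fml.neg (preIsolator n S)) := by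
  constructor
  · intro hp
    exact prime_to_consistent hn hp
  · intro hcons
    by_contra hnp
    apply hcons
    rw [PrimeConditions] at hnp
    rcases not_and_or.mp hnp with h | h
    · exact case_empty h
    · rcases not_and_or.mp h with h | h
      · push_neg at h
        obtain ⟨j, h0, h1, h2⟩ := h
        exact case_ground j h0 h1 (by rw [h2]; simp)
      · push_neg at h
        obtain ⟨J, hJ, hall, hempty⟩ := h
        exact case_min hn J hJ hall (by rw [hempty]; simp)

end KripkeModal
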